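/- Let ε > 0 and let u, v, a, χ ∈ ℝ satisfy 0 ≤ χ ≤ 1, χ = 1 whenever u < v, and χ = 0 whenever u > v. Then (H_ε(v − a) − χ)·(a − u) ≤ ε. -/
import Mathlib


/-- The regularized Heaviside function `H_ε`. -/
noncomputable def Heps (ε t : ℝ) : ℝ := max 0 (min (t / ε) 1)

theorem stmt3 (ε u v a χ : ℝ) (hε : 0 < ε)
    (hχ0 : 0 ≤ χ) (hχ1 : χ ≤ 1)
    (hlt : u < v → χ = 1) (hgt : u > v → χ = 0) :
    (Heps ε (v - a) - χ) * (a - u) ≤ ε := by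
  unfold Heps
  have key : (v - a) / ε * ε = v - a := div_mul_cancel₀ (v - a) hε.ne'
  rcases le_total ((v - a) / ε) 0 with h1 | h1
  · rw [min_eq_left (h1.trans zero_le_one), max_eq_left h1]
    have hva : v ≤ a := by nlinarith
    rcases le_or_gt u a with h | h
    · nlinarith
    · rw [hgt (lt_of_le_of_lt hva h)]; nlinarith
  · rw [max_eq_right (le_min h1 zero_le_one)]
    have hav : a ≤ v := by nlinarith
    rcases le_total 1 ((v - a) / ε) with h2 | h2
    · rw [min_eq_right h2]
      rcases le_or_gt a u with h | h
      · nlinarith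
      · rw [hlt (by nlinarith : u < v)]; nlinarith
    · rw [min_eq_left h2]
      rcases lt_trichotomy u v with h | h | h
      · rw [hlt h]
        rcases le_or_gt a u with h3 | h3
        · nlinarith [mul_nonneg (sub_nonneg.2 h2) (sub_nonneg.2 h3),
            mul_nonneg hε.le (sq_nonneg ((v - a) / ε - 1/2))]
        · nlinarith [mul_nonneg (sub_nonneg.2 h2) (sub_nonneg.2 h3.le)]
      · subst h
        have hua : 0 ≤ u - a := by nlinarith
        nlinarith [mul_nonneg (sub_nonneg.2 hχ1) hua, mul_nonneg h1 hua,
          mul_nonneg hχ0 hua]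
      · rw [hgt h]
        nlinarith [mul_nonneg h1 (by nlinarith : (0:ℝ) ≤ u - a)]
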